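/- arXiv:1001.4145 — 2 statements merged into one kernel-verified Lean document; each statement's English description precedes it below -/
import Mathlib

section
/- Let C = cone(v₁, …, v_k) ⊆ ℝⁿ be a rational polyhedral cone with v₁, …, v_k ∈ ℤⁿ, such that v₁, …, v_{k-1} lie in a facet of C defined by a hyperplane cᵀx = 0 with c ∈ ℤⁿ, cᵀv_i = 0 for i < k, cᵀy ≥ 0 for all y ∈ C, and cᵀv_k = 1. Then every lattice point z ∈ C ∩ ℤⁿ can be written as z = λ·v_k + z' where λ ∈ ℕ and z' ∈ cone(v₁, …, v_{k-1}) ∩ ℤⁿ. Consequently, the monoid C ∩ ℤⁿ is generated by {v_k} together with the Hilbert basis of cone(v₁, …, v_{k-1}). -/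
def IsLatticePt {n : ℕ} (x : Fin n → ℝ) : Prop := ∀ i, ∃ m : ℤ, x i = (m : ℝ)

def coneOf {n k : ℕ} (v : Fin k → (Fin n → ℝ)) : Set (Fin n → ℝ) :=
  {x | ∃ lam : Fin k → ℝ, (∀ i, 0 ≤ lam i) ∧ x = ∑ i, lam i • v i}

lemma coneOf_zero {n k : ℕ} (g : Fin k → (Fin n → ℝ)) : (0 : Fin n → ℝ) ∈ coneOf g :=
  ⟨0, fun _ => le_refl _, by simp⟩

lemma coneOf_add {n k : ℕ} {g : Fin k → (Fin n → ℝ)} {x y : Fin n → ℝ}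
    (hx : x ∈ coneOf g) (hy : y ∈ coneOf g) : x + y ∈ coneOf g := by
  obtain ⟨a, ha, rfl⟩ := hx; obtain ⟨b, hb, rfl⟩ := hy
  exact ⟨a + b, fun i => add_nonneg (ha i) (hb i), by
    rw [← Finset.sum_add_distrib]; exact Finset.sum_congr rfl fun i _ => (add_smul _ _ _).symm⟩

lemma coneOf_smul {n k : ℕ} {g : Fin k → (Fin n → ℝ)} {x : Fin n → ℝ} {r : ℝ}
    (hr : 0 ≤ r) (hx : x ∈ coneOf g) : r • x ∈ coneOf g := by
  obtain ⟨a, ha, rfl⟩ := hx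
  exact ⟨fun i => r * a i, fun i => mul_nonneg hr (ha i), by
    rw [Finset.smul_sum]; exact Finset.sum_congr rfl fun i _ => (mul_smul _ _ _).symm⟩

lemma coneOf_gen {n k : ℕ} (g : Fin k → (Fin n → ℝ)) (i : Fin k) : g i ∈ coneOf g := by
  refine ⟨fun j => if j = i then 1 else 0, fun j => by positivity, ?_⟩
  simp [ite_smul]

lemma coneOf_sum {n k : ℕ} {g : Fin k → (Fin n → ℝ)} {ι : Type*} (s : Finset ι)
    (f : ι → (Fin n → ℝ)) (h : ∀ i ∈ s, f i ∈ coneOf g) : (∑ i ∈ s, f i) ∈ coneOf g :=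
  Finset.sum_induction f (· ∈ coneOf g) (fun _ _ ha hb => coneOf_add ha hb) (coneOf_zero g) h

def IsIrred {n : ℕ} (M : Set (Fin n → ℝ)) (h : Fin n → ℝ) : Prop :=
  h ∈ M ∧ h ≠ 0 ∧ ∀ a b : Fin n → ℝ, a ∈ M → b ∈ M → h = a + b → a = 0 ∨ b = 0

def HilbBasis {n : ℕ} (C : Set (Fin n → ℝ)) : Set (Fin n → ℝ) :=
  {h | IsIrred {x | x ∈ C ∧ IsLatticePt x} h}

lemma lattice_one_le {n : ℕ} {x : Fin n → ℝ} (hx : IsLatticePt x) (hne : x ≠ 0) :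
    ∃ t, 1 ≤ |x t| := by
  by_contra h
  push_neg at h
  apply hne; funext t
  obtain ⟨m, hm⟩ := hx t
  have := h t
  rw [hm] at this ⊢
  have hm1 : |m| < 1 := by exact_mod_cast this
  rw [abs_lt] at hm1
  have : m = 0 := by omega
  simp [this]

/-- Every lattice point of a pointed finitely generated cone lies in the monoid generated by
the Hilbert basis. -/
lemma hilb_gen {n k : ℕ} (g : Fin k → (Fin n → ℝ))
    (hpt : ∀ x ∈ coneOf g, -x ∈ coneOf g → x = 0) :
    ∀ z ∈ coneOf g, IsLatticePt z →
      z ∈ (AddSubmonoid.closure (HilbBasis (coneOf g)) : Set (Fin n → ℝ)) := by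
  -- the set of nonzero generators
  set T : Set (Fin n → ℝ) := g '' {i | g i ≠ 0} with hT
  have hTfin : T.Finite := Set.Finite.image _ (Set.toFinite _)
  -- 0 is not in the convex hull of T
  have h0T : (0 : Fin n → ℝ) ∉ convexHull ℝ T := by
    classical
    intro h0
    rw [convexHull_eq] at h0
    obtain ⟨ι, t, wt, zt, hw0, hw1, hzT, hcm⟩ := h0
    rw [Finset.centerMass, hw1, inv_one, one_smul] at hcm
    -- pick an index with positive weight
    have : ∃ i ∈ t, 0 < wt i := by
      by_contra h
      push_neg at h
      have : ∑ i ∈ t, wt i ≤ 0 := Finset.sum_nonpos fun i hi => h i hi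
      rw [hw1] at this; linarith
    obtain ⟨i0, hi0, hwi0⟩ := this
    have hz0 : zt i0 ∈ coneOf g := by
      obtain ⟨j, _, hj⟩ := hzT i0 hi0
      exact hj ▸ coneOf_gen g j
    have hmem : wt i0 • zt i0 ∈ coneOf g := coneOf_smul hwi0.le hz0
    have hneg : -(wt i0 • zt i0) ∈ coneOf g := by
      have h2 : wt i0 • zt i0 + ∑ i ∈ t.erase i0, wt i • zt i = 0 := by
        have h3 := Finset.add_sum_erase t (fun i => wt i • zt i) hi0
        rw [hcm] at h3
        simpa using h3
      rw [neg_eq_of_add_eq_zero_right h2]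
      refine coneOf_sum _ _ fun i hi => ?_
      obtain ⟨j, _, hj⟩ := hzT i (Finset.mem_of_mem_erase hi)
      exact coneOf_smul (hw0 i (Finset.mem_of_mem_erase hi)) (hj ▸ coneOf_gen g j)
    have := hpt _ hmem hneg
    have hz0' : zt i0 = 0 := by
      have := smul_eq_zero.mp this
      rcases this with h | h
      · exact absurd h hwi0.ne'
      · exact h
    obtain ⟨j, hjne, hj⟩ := hzT i0 hi0
    exact hjne (hj.symm ▸ hz0')
  -- separating functional
  obtain ⟨f, a, b, hfa, hab, hfb⟩ :=
    geometric_hahn_banach_compact_closed (convex_singleton (0 : Fin n → ℝ)) isCompact_singleton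
      (convex_convexHull ℝ T) (hTfin.isCompact_convexHull ℝ).isClosed
      (Set.disjoint_singleton_left.mpr h0T)
  have hf0 : f 0 < a := hfa 0 rfl
  rw [map_zero] at hf0
  have hbpos : 0 < b := lt_trans hf0 hab
  have hfg : ∀ i, g i ≠ 0 → b ≤ f (g i) := fun i hi =>
    (hfb _ (subset_convexHull ℝ T ⟨i, hi, rfl⟩)).le
  have hfg0 : ∀ i, 0 ≤ f (g i) := by
    intro i
    by_cases hi : g i = 0
    · rw [hi, map_zero]
    · exact le_trans hbpos.le (hfg i hi)
  -- a bound on coordinates of generators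
  set B : ℝ := (∑ i, ∑ t, |g i t|) + 1 with hB
  have hB1 : 1 ≤ B := by
    have : 0 ≤ ∑ i, ∑ t, |g i t| :=
      Finset.sum_nonneg fun i _ => Finset.sum_nonneg fun t _ => abs_nonneg _
    linarith
  have hBbound : ∀ i t, |g i t| ≤ B := by
    intro i t
    have h1 : |g i t| ≤ ∑ t, |g i t| :=
      Finset.single_le_sum (fun t _ => abs_nonneg (g i t)) (Finset.mem_univ t)
    have h2 : ∑ t, |g i t| ≤ ∑ i, ∑ t, |g i t| :=
      Finset.single_le_sum (f := fun i => ∑ t, |g i t|)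
        (fun i _ => Finset.sum_nonneg fun t _ => abs_nonneg _) (Finset.mem_univ i)
    linarith
  set K : ℝ := B / b with hK
  have hKpos : 0 < K := div_pos (lt_of_lt_of_le one_pos hB1) hbpos
  -- f expansion on the cone
  have hfexp : ∀ lam : Fin k → ℝ, f (∑ i, lam i • g i) = ∑ i, lam i * f (g i) := by
    intro lam
    rw [map_sum]
    exact Finset.sum_congr rfl fun i _ => by rw [map_smul]; rfl
  have hfnn : ∀ x ∈ coneOf g, 0 ≤ f x := by
    rintro x ⟨lam, hlam, rfl⟩
    rw [hfexp]
    exact Finset.sum_nonneg fun i _ => mul_nonneg (hlam i) (hfg0 i)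
  -- coordinate bound
  have hbound : ∀ x ∈ coneOf g, ∀ t, |x t| ≤ K * f x := by
    rintro x ⟨lam, hlam, rfl⟩ t
    have hxt : (∑ i, lam i • g i) t = ∑ i, lam i * g i t := by
      rw [Finset.sum_apply]; rfl
    rw [hxt, hfexp, Finset.mul_sum]
    refine le_trans (Finset.abs_sum_le_sum_abs _ _) (Finset.sum_le_sum fun i _ => ?_)
    rw [abs_mul, abs_of_nonneg (hlam i)]
    by_cases hi : g i = 0
    · simp [hi]
    · have h1 : |g i t| ≤ K * f (g i) := by
        have : K * b ≤ K * f (g i) := mul_le_mul_of_nonneg_left (hfg i hi) hKpos.le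
        have hKb : K * b = B := div_mul_cancel₀ _ hbpos.ne'
        calc |g i t| ≤ B := hBbound i t
          _ = K * b := hKb.symm
          _ ≤ K * f (g i) := this
      calc lam i * |g i t| ≤ lam i * (K * f (g i)) :=
            mul_le_mul_of_nonneg_left h1 (hlam i)
        _ = K * (lam i * f (g i)) := by ring
  -- nonzero lattice points have f-value at least 1/K (i.e. K * f z ≥ 1)
  have hlow : ∀ x ∈ coneOf g, IsLatticePt x → x ≠ 0 → 1 ≤ K * f x := by
    intro x hx hlat hne
    obtain ⟨t, ht⟩ := lattice_one_le hlat hne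
    exact le_trans ht (hbound x hx t)
  -- the monoid of lattice points of the cone
  set M : Set (Fin n → ℝ) := {x | x ∈ coneOf g ∧ IsLatticePt x} with hM
  -- main induction
  have main : ∀ N : ℕ, ∀ z ∈ coneOf g, IsLatticePt z → K * f z ≤ N →
      z ∈ (AddSubmonoid.closure (HilbBasis (coneOf g)) : Set (Fin n → ℝ)) := by
    intro N
    induction N with
    | zero =>
      intro z hz hlat hle
      have : z = 0 := by
        by_contra hne
        have := hlow z hz hlat hne
        norm_num at hle
        linarith
      rw [this]
      exact AddSubmonoid.zero_mem _
    | succ N ih =>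
      intro z hz hlat hle
      by_cases hz0 : z = 0
      · rw [hz0]; exact AddSubmonoid.zero_mem _
      by_cases hirr : IsIrred M z
      · exact AddSubmonoid.subset_closure hirr
      · have : ∃ x y : Fin n → ℝ, x ∈ M ∧ y ∈ M ∧ z = x + y ∧ x ≠ 0 ∧ y ≠ 0 := by
          rw [IsIrred] at hirr
          push_neg at hirr
          obtain ⟨x, y, hxM, hyM, hzxy, hx0, hy0⟩ := hirr ⟨hz, hlat⟩ hz0
          exact ⟨x, y, hxM, hyM, hzxy, hx0, hy0⟩
        obtain ⟨x, y, ⟨hxC, hxl⟩, ⟨hyC, hyl⟩, hzxy, hx0, hy0⟩ := this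
        have hfz : f z = f x + f y := by rw [hzxy, map_add]
        have h1x : 1 ≤ K * f x := hlow x hxC hxl hx0
        have h1y : 1 ≤ K * f y := hlow y hyC hyl hy0
        have hxle : K * f x ≤ N := by
          have : K * f z = K * f x + K * f y := by rw [hfz]; ring
          push_cast at hle ⊢
          linarith
        have hyle : K * f y ≤ N := by
          have : K * f z = K * f x + K * f y := by rw [hfz]; ring
          push_cast at hle ⊢
          linarith
        rw [hzxy]
        exact AddSubmonoid.add_mem _ (ih x hxC hxl hxle) (ih y hyC hyl hyle)
  intro z hz hlat
  exact main ⌈K * f z⌉₊ z hz hlat (Nat.le_ceil _)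

lemma IsLatticePt.add' {n : ℕ} {x y : Fin n → ℝ} (hx : IsLatticePt x) (hy : IsLatticePt y) :
    IsLatticePt (x + y) := by
  intro t
  obtain ⟨a, ha⟩ := hx t; obtain ⟨b, hb⟩ := hy t
  exact ⟨a + b, by rw [Pi.add_apply, ha, hb]; push_cast; ring⟩

lemma IsLatticePt.zero' {n : ℕ} : IsLatticePt (0 : Fin n → ℝ) := fun _ => ⟨0, by simp⟩

/-- Lemma "Removing generators": `v 0, …, v (m-1)` are the generators lying in the facet
`cᵀx = 0` of `C`, and `w` (= `v_k`) satisfies `cᵀ w = 1`. -/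
theorem stmt1 {n m : ℕ} (v : Fin m → (Fin n → ℤ)) (w : Fin n → ℤ) (c : Fin n → ℤ)
    (C C' : Set (Fin n → ℝ))
    (hC : C = coneOf (Fin.snoc (fun i t => ((v i t : ℤ) : ℝ)) (fun t => ((w t : ℤ) : ℝ))))
    (hC' : C' = coneOf (fun i t => ((v i t : ℤ) : ℝ)))
    (hfacet0 : ∀ i : Fin m, ∑ t, c t * v i t = 0)
    (hcnonneg : ∀ y ∈ C, 0 ≤ ∑ t, (c t : ℝ) * y t)
    (hcw : ∑ t, c t * w t = 1)
    (hpointed : ∀ x ∈ C, -x ∈ C → x = 0) :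
    (∀ z ∈ C, IsLatticePt z →
        ∃ (lam : ℕ) (z' : Fin n → ℝ), z' ∈ C' ∧ IsLatticePt z' ∧
          z = (lam : ℝ) • (fun t => ((w t : ℤ) : ℝ)) + z') ∧
    {z | z ∈ C ∧ IsLatticePt z} =
      (AddSubmonoid.closure ({fun t => ((w t : ℤ) : ℝ)} ∪ HilbBasis C') : Set (Fin n → ℝ)) := by
  classical
  subst hC; subst hC'
  set U : Fin m → (Fin n → ℝ) := fun i t => ((v i t : ℤ) : ℝ) with hU
  set W : Fin n → ℝ := fun t => ((w t : ℤ) : ℝ) with hW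
  -- C' ⊆ C
  have hsub : coneOf U ⊆ coneOf (Fin.snoc U W) := by
    rintro x ⟨lam, hlam, rfl⟩
    refine ⟨Fin.snoc lam 0, ?_, ?_⟩
    · intro i
      refine Fin.lastCases ?_ ?_ i
      · simp
      · intro j; simpa using hlam j
    · rw [Fin.sum_univ_castSucc]
      simp
  have hWC : W ∈ coneOf (Fin.snoc U W) := by
    have := coneOf_gen (Fin.snoc U W) (Fin.last m)
    simpa using this
  -- Part 1
  have part1 : ∀ z ∈ coneOf (Fin.snoc U W), IsLatticePt z →
      ∃ (lam : ℕ) (z' : Fin n → ℝ), z' ∈ coneOf U ∧ IsLatticePt z' ∧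
        z = (lam : ℝ) • W + z' := by
    rintro z ⟨lam, hlam, hzeq⟩ hlat
    set z' : Fin n → ℝ := ∑ i : Fin m, lam i.castSucc • U i with hz'
    have hzsplit : z = z' + lam (Fin.last m) • W := by
      rw [hzeq, Fin.sum_univ_castSucc]
      simp [hz']
    have hz'C' : z' ∈ coneOf U := ⟨fun i => lam i.castSucc, fun i => hlam _, rfl⟩
    have hUdot : ∀ i : Fin m, ∑ t, (c t : ℝ) * U i t = 0 := by
      intro i
      have h1 : ((∑ t, c t * v i t : ℤ) : ℝ) = 0 := by rw [hfacet0 i]; norm_num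
      push_cast at h1
      exact h1
    have hdotz' : ∑ t, (c t : ℝ) * z' t = 0 := by
      have hco : ∀ t, z' t = ∑ i : Fin m, lam i.castSucc * U i t := by
        intro t; rw [hz', Finset.sum_apply]; rfl
      calc ∑ t, (c t : ℝ) * z' t
          = ∑ t, ∑ i : Fin m, lam i.castSucc * ((c t : ℝ) * U i t) := by
            refine Finset.sum_congr rfl fun t _ => ?_
            rw [hco t, Finset.mul_sum]
            exact Finset.sum_congr rfl fun i _ => by ring
        _ = ∑ i : Fin m, lam i.castSucc * ∑ t, (c t : ℝ) * U i t := by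
            rw [Finset.sum_comm]
            exact Finset.sum_congr rfl fun i _ => by rw [Finset.mul_sum]
        _ = 0 := Finset.sum_eq_zero fun i _ => by rw [hUdot i, mul_zero]
    have hdotW : ∑ t, (c t : ℝ) * W t = 1 := by
      have h1 : ((∑ t, c t * w t : ℤ) : ℝ) = 1 := by rw [hcw]; norm_num
      push_cast at h1
      exact h1
    have hdotz : ∑ t, (c t : ℝ) * z t = lam (Fin.last m) := by
      calc ∑ t, (c t : ℝ) * z t
          = ∑ t, ((c t : ℝ) * z' t + lam (Fin.last m) * ((c t : ℝ) * W t)) := by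
            refine Finset.sum_congr rfl fun t _ => ?_
            have : z t = z' t + lam (Fin.last m) * W t := by rw [hzsplit]; rfl
            rw [this]; ring
        _ = ∑ t, (c t : ℝ) * z' t + lam (Fin.last m) * ∑ t, (c t : ℝ) * W t := by
            rw [Finset.sum_add_distrib, Finset.mul_sum]
        _ = lam (Fin.last m) := by rw [hdotz', hdotW]; ring
    choose zi hzi using hlat
    have hdotzint : ∑ t, (c t : ℝ) * z t = ((∑ t, c t * zi t : ℤ) : ℝ) := by
      push_cast
      exact Finset.sum_congr rfl fun t _ => by rw [hzi t]
    set Mz : ℤ := ∑ t, c t * zi t with hMzdef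
    have hMz : (Mz : ℝ) = lam (Fin.last m) := by rw [← hdotzint, hdotz]
    have hMznn : 0 ≤ Mz := by
      have : (0 : ℝ) ≤ (Mz : ℝ) := by rw [hMz]; exact hlam _
      exact_mod_cast this
    have hcastN : ((Mz.toNat : ℕ) : ℝ) = lam (Fin.last m) := by
      rw [← hMz]
      exact_mod_cast congrArg (Int.cast : ℤ → ℝ) (Int.toNat_of_nonneg hMznn)
    refine ⟨Mz.toNat, z', hz'C', ?_, ?_⟩
    · intro t
      refine ⟨zi t - Mz * w t, ?_⟩
      have h1 : z' t = z t - lam (Fin.last m) * W t := by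
        rw [hzsplit]; simp [Pi.add_apply]
      rw [h1, hzi t, ← hMz]
      push_cast
      ring
    · rw [hzsplit, hcastN]
      exact (add_comm _ _)
  refine ⟨part1, ?_⟩
  -- Part 2
  -- pointedness of the smaller cone
  have hpt' : ∀ x ∈ coneOf U, -x ∈ coneOf U → x = 0 := fun x hx hnx =>
    hpointed x (hsub hx) (hsub hnx)
  -- the monoid of lattice points of C
  set M : AddSubmonoid (Fin n → ℝ) :=
    { carrier := {z | z ∈ coneOf (Fin.snoc U W) ∧ IsLatticePt z}
      zero_mem' := ⟨coneOf_zero _, IsLatticePt.zero'⟩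
      add_mem' := fun ha hb => ⟨coneOf_add ha.1 hb.1, IsLatticePt.add' ha.2 hb.2⟩ } with hM
  ext z
  simp only [Set.mem_setOf_eq, SetLike.mem_coe]
  constructor
  · rintro ⟨hzC, hzl⟩
    obtain ⟨N, z', hz'C', hz'l, hsplit⟩ := part1 z hzC hzl
    rw [hsplit]
    have hWmem : W ∈ AddSubmonoid.closure ({W} ∪ HilbBasis (coneOf U)) :=
      AddSubmonoid.subset_closure (Set.mem_union_left _ (Set.mem_singleton W))
    have hNW : (N : ℝ) • W = N • W := Nat.cast_smul_eq_nsmul ℝ N W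
    have h1 : (N : ℝ) • W ∈ AddSubmonoid.closure ({W} ∪ HilbBasis (coneOf U)) := by
      rw [hNW]
      exact AddSubmonoid.nsmul_mem _ hWmem N
    have h2 : z' ∈ AddSubmonoid.closure ({W} ∪ HilbBasis (coneOf U)) :=
      AddSubmonoid.closure_mono Set.subset_union_right (hilb_gen U hpt' z' hz'C' hz'l)
    exact AddSubmonoid.add_mem _ h1 h2
  · intro hz
    have hle : AddSubmonoid.closure ({W} ∪ HilbBasis (coneOf U)) ≤ M := by
      rw [AddSubmonoid.closure_le]
      rintro x (hx | hx)
      · rw [Set.mem_singleton_iff] at hx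
        subst hx
        exact ⟨hWC, fun t => ⟨w t, rfl⟩⟩
      · exact ⟨hsub hx.1.1, hx.1.2⟩
    exact hle hz
end

section
/- In the setting of Lemma 'Removing generators': if C = cone(v₁, …, v_k) with integer generators, v₁, …, v_{k-1} lie in the hyperplane cᵀx = 0 with c ∈ ℤⁿ, cᵀy ≥ 0 on C, and cᵀv_k = 1, then the Hilbert basis of C is contained in {v_k} ∪ H(cone(v₁, …, v_{k-1})), and v_k is an irreducible element of C ∩ ℤⁿ. -/
/-- real dot product with integer left vector -/
def dotp {n : ℕ} (c : Fin n → ℤ) (x : Fin n → ℝ) : ℝ := ∑ t, (c t : ℝ) * x t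

lemma dotp_sum_smul {n m : ℕ} (c : Fin n → ℤ) (lam : Fin m → ℝ) (V : Fin m → Fin n → ℝ) :
    dotp c (∑ i, lam i • V i) = ∑ i, lam i * dotp c (V i) := by
  unfold dotp
  simp only [Finset.sum_apply, Pi.smul_apply, smul_eq_mul, Finset.mul_sum]
  rw [Finset.sum_comm]
  congr 1; funext i
  congr 1; funext t
  ring

lemma mem_snoc_cone_iff {n m : ℕ} (V : Fin m → Fin n → ℝ) (W : Fin n → ℝ) (x : Fin n → ℝ) :
    x ∈ coneOf (Fin.snoc V W) ↔
      ∃ lam : Fin m → ℝ, ∃ μ : ℝ, (∀ i, 0 ≤ lam i) ∧ 0 ≤ μ ∧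
        x = ∑ i, lam i • V i + μ • W := by
  constructor
  · rintro ⟨lam, hlam, rfl⟩
    refine ⟨fun i => lam i.castSucc, lam (Fin.last m), fun i => hlam _, hlam _, ?_⟩
    rw [Fin.sum_univ_castSucc]
    simp
  · rintro ⟨lam, μ, h1, h2, rfl⟩
    refine ⟨Fin.snoc lam μ, ?_, ?_⟩
    · intro i
      induction i using Fin.lastCases with
      | last => simpa using h2
      | cast i => simpa using h1 i
    · rw [Fin.sum_univ_castSucc]
      simp

/-- In the setting of the "Removing generators" lemma: the Hilbert basis of `C`
is contained in `{v_k} ∪ H(C')`, and `v_k` is irreducible in `C ∩ ℤⁿ`. -/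
theorem stmt12 {n m : ℕ} (v : Fin m → (Fin n → ℤ)) (w : Fin n → ℤ) (c : Fin n → ℤ)
    (C C' : Set (Fin n → ℝ))
    (hC : C = coneOf (Fin.snoc (fun i t => ((v i t : ℤ) : ℝ)) (fun t => ((w t : ℤ) : ℝ))))
    (hC' : C' = coneOf (fun i t => ((v i t : ℤ) : ℝ)))
    (hfacet0 : ∀ i : Fin m, ∑ t, c t * v i t = 0)
    (hcnonneg : ∀ y ∈ C, 0 ≤ ∑ t, (c t : ℝ) * y t)
    (hcw : ∑ t, c t * w t = 1)
    (hpointed : ∀ x ∈ C, -x ∈ C → x = 0) :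
    HilbBasis C ⊆ {fun t => ((w t : ℤ) : ℝ)} ∪ HilbBasis C' ∧
    IsIrred {x | x ∈ C ∧ IsLatticePt x} (fun t => ((w t : ℤ) : ℝ)) := by
  set V : Fin m → Fin n → ℝ := fun i t => ((v i t : ℤ) : ℝ) with hV
  set W : Fin n → ℝ := fun t => ((w t : ℤ) : ℝ) with hW
  -- dot products of generators
  have hdV : ∀ i, dotp c (V i) = 0 := by
    intro i
    unfold dotp
    have := hfacet0 i
    push_cast [hV]
    exact_mod_cast congrArg (fun z : ℤ => (z : ℝ)) this
  have hdW : dotp c W = 1 := by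
    unfold dotp
    simp only [hW]
    exact_mod_cast congrArg (fun z : ℤ => (z : ℝ)) hcw
  -- dot product of an element of C equals its μ-coefficient
  have hdot_rep : ∀ (lam : Fin m → ℝ) (μ : ℝ),
      dotp c (∑ i, lam i • V i + μ • W) = μ := by
    intro lam μ
    have h1 : dotp c (∑ i, lam i • V i + μ • W)
        = dotp c (∑ i, lam i • V i) + μ * dotp c W := by
      unfold dotp
      rw [Finset.mul_sum, ← Finset.sum_add_distrib]
      congr 1; funext t
      simp only [Pi.add_apply, Pi.smul_apply, smul_eq_mul]
      ring
    rw [h1, dotp_sum_smul, hdW]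
    simp [hdV]
  -- membership lemma for C
  have hmemC : ∀ x, x ∈ C ↔ ∃ lam : Fin m → ℝ, ∃ μ : ℝ, (∀ i, 0 ≤ lam i) ∧ 0 ≤ μ ∧
      x = ∑ i, lam i • V i + μ • W := by
    intro x; rw [hC]; exact mem_snoc_cone_iff V W x
  have hC'subC : C' ⊆ C := by
    intro x hx
    rw [hC'] at hx
    obtain ⟨lam, hlam, rfl⟩ := hx
    rw [hmemC]
    exact ⟨lam, 0, hlam, le_refl 0, by simp⟩
  -- x ∈ C with dotp = 0 lies in C'
  have hface : ∀ x ∈ C, dotp c x = 0 → x ∈ C' := by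
    intro x hx hx0
    obtain ⟨lam, μ, hlam, hμ, rfl⟩ := (hmemC x).1 hx
    rw [hdot_rep] at hx0
    rw [hC']
    exact ⟨lam, hlam, by simp [hx0]⟩
  -- x ∈ C with dotp ≥ 1 gives x - W ∈ C
  have hsub : ∀ x ∈ C, 1 ≤ dotp c x → x - W ∈ C := by
    intro x hx hx1
    obtain ⟨lam, μ, hlam, hμ, rfl⟩ := (hmemC x).1 hx
    rw [hdot_rep] at hx1
    rw [hmemC]
    refine ⟨lam, μ - 1, hlam, by linarith, ?_⟩
    funext t
    simp only [Pi.sub_apply, Pi.add_apply, Pi.smul_apply, smul_eq_mul]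
    ring
  have hWmemC : W ∈ C := by
    rw [hmemC]
    exact ⟨fun _ => 0, 1, fun _ => le_refl 0, zero_le_one, by simp⟩
  have hWlat : IsLatticePt W := fun t => ⟨w t, rfl⟩
  have hWne : W ≠ 0 := by
    intro h
    rw [h] at hdW
    simp [dotp] at hdW
  -- lattice points have integer dot products
  have hdot_int : ∀ x : Fin n → ℝ, IsLatticePt x → ∃ z : ℤ, dotp c x = (z : ℝ) := by
    intro x hx
    choose f hf using hx
    refine ⟨∑ t, c t * f t, ?_⟩
    unfold dotp
    push_cast
    congr 1; funext t
    rw [hf t]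
  have hdot_nonneg : ∀ x ∈ C, 0 ≤ dotp c x := fun x hx => hcnonneg x hx
  -- dotp is additive
  have hdot_add : ∀ x y : Fin n → ℝ, dotp c (x + y) = dotp c x + dotp c y := by
    intro x y
    unfold dotp
    rw [← Finset.sum_add_distrib]
    congr 1; funext t
    simp only [Pi.add_apply]
    ring
  -- key: if a, b ∈ C ∩ ℤⁿ and W = a + b then a = 0 or b = 0
  have hkey : ∀ a b : Fin n → ℝ, a ∈ C → IsLatticePt a → b ∈ C → IsLatticePt b →
      W = a + b → a = 0 ∨ b = 0 := by
    intro a b haC haL hbC hbL hab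
    obtain ⟨za, hza⟩ := hdot_int a haL
    obtain ⟨zb, hzb⟩ := hdot_int b hbL
    have hza0 : (0:ℝ) ≤ za := hza ▸ hdot_nonneg a haC
    have hzb0 : (0:ℝ) ≤ zb := hzb ▸ hdot_nonneg b hbC
    have hsum : (za : ℝ) + zb = 1 := by
      rw [← hza, ← hzb, ← hdot_add, ← hab, hdW]
    have hza0' : 0 ≤ za := by exact_mod_cast hza0
    have hzb0' : 0 ≤ zb := by exact_mod_cast hzb0
    have hsum' : za + zb = 1 := by exact_mod_cast hsum
    have hcases : za = 0 ∨ zb = 0 := by omega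
    rcases hcases with h0 | h0
    · -- a ∈ C', -a = b - W ∈ C'
      left
      have haC' : a ∈ C' := hface a haC (by rw [hza, h0]; simp)
      have hb1 : 1 ≤ dotp c b := by rw [hzb]; exact_mod_cast by omega
      have : b - W ∈ C := hsub b hbC hb1
      have hbw : b - W = -a := by
        funext t
        have := congrFun hab t
        simp only [Pi.add_apply] at this
        simp only [Pi.sub_apply, Pi.neg_apply]
        linarith
      exact hpointed a (hC'subC haC') (hbw ▸ this)
    · right
      have hbC' : b ∈ C' := hface b hbC (by rw [hzb, h0]; simp)
      have ha1 : 1 ≤ dotp c a := by rw [hza]; exact_mod_cast by omega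
      have : a - W ∈ C := hsub a haC ha1
      have haw : a - W = -b := by
        funext t
        have := congrFun hab t
        simp only [Pi.add_apply] at this
        simp only [Pi.sub_apply, Pi.neg_apply]
        linarith
      exact hpointed b (hC'subC hbC') (haw ▸ this)
  constructor
  · -- Hilbert basis containment
    intro h hh
    obtain ⟨⟨hhC, hhL⟩, hhne, hirr⟩ := hh
    obtain ⟨d, hd⟩ := hdot_int h hhL
    have hd0 : (0:ℝ) ≤ d := hd ▸ hdot_nonneg h hhC
    have hd0' : 0 ≤ d := by exact_mod_cast hd0
    rcases eq_or_lt_of_le hd0' with hd1 | hd1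
    · -- d = 0 : h ∈ C', irreducible there
      right
      refine ⟨⟨hface h hhC (by rw [hd, ← hd1]; simp), hhL⟩, hhne, ?_⟩
      intro a b ha hb hab
      exact hirr a b ⟨hC'subC ha.1, ha.2⟩ ⟨hC'subC hb.1, hb.2⟩ hab
    · -- d ≥ 1 : h = (h - W) + W forces h = W
      left
      have hd1' : 1 ≤ dotp c h := by rw [hd]; exact_mod_cast hd1
      have hhw : h - W ∈ C := hsub h hhC hd1'
      have hhwL : IsLatticePt (h - W) := by
        intro t
        obtain ⟨z, hz⟩ := hhL t
        exact ⟨z - w t, by simp only [Pi.sub_apply]; rw [hz]; push_cast; rfl⟩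
      have heq : h = (h - W) + W := by funext t; simp
      rcases hirr (h - W) W ⟨hhw, hhwL⟩ ⟨hWmemC, hWlat⟩ heq with h0 | h0
      · have : h = W := by
          funext t
          have := congrFun h0 t
          simp only [Pi.sub_apply, Pi.zero_apply] at this
          linarith
        simpa using this
      · exact absurd h0 hWne
  · exact ⟨⟨hWmemC, hWlat⟩, hWne, fun a b ha hb hab =>
      hkey a b ha.1 ha.2 hb.1 hb.2 hab⟩
end
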